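/- A finite graph G has a bramble of order at least k if and only if G has an F_k-tangle of S_k, i.e., a consistent orientation of the vertex separations of order < k with no subset in F_k. -/

import Mathlib

variable {V : Type*}

/-- The inverse of an oriented separation: `(A,B) ↦ (B,A)`. -/
def sInv (p : Set V × Set V) : Set V × Set V := (p.2, p.1)

/-- `(A,B) ≤ (C,D)` iff `A ⊆ C` and `B ⊇ D`. -/
def sLe (p q : Set V × Set V) : Prop := p.1 ⊆ q.1 ∧ q.2 ⊆ p.2

/-- Strict version of `sLe`. -/
def sLt (p q : Set V × Set V) : Prop := sLe p q ∧ p ≠ q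

/-- `(A,B)` is an (oriented) vertex separation of the graph `G`:
`A ∪ B = V` and `G` has no edge between `A \ B` and `B \ A`. -/
def GIsSep (G : SimpleGraph V) (p : Set V × Set V) : Prop :=
  p.1 ∪ p.2 = Set.univ ∧
    ∀ a b : V, a ∈ p.1 → a ∉ p.2 → b ∈ p.2 → b ∉ p.1 → ¬ G.Adj a b

/-- The order `|A ∩ B|` of a separation `(A,B)`. -/
noncomputable def sOrd (p : Set V × Set V) : ℕ := (p.1 ∩ p.2).ncard

/-- `S⃗_k`: the oriented vertex separations of `G` of order `< k`. -/
def Sk (G : SimpleGraph V) (k : ℕ) : Set (Set V × Set V) :=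
  {p | GIsSep G p ∧ sOrd p < k}

/-- A star of oriented separations: nondegenerate, pointing towards each other. -/
def IsStarP (σ : Set (Set V × Set V)) : Prop :=
  (∀ p ∈ σ, p ≠ sInv p) ∧ ∀ p ∈ σ, ∀ q ∈ σ, p ≠ q → sLe p (sInv q)

/-- `O` is an orientation of `S`: `O ⊆ S` contains exactly one orientation of
each separation in `S`. -/
def IsOrientation (S O : Set (Set V × Set V)) : Prop :=
  O ⊆ S ∧ (∀ p ∈ S, p ∈ O ∨ sInv p ∈ O) ∧ ∀ p ∈ O, p ≠ sInv p → sInv p ∉ O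

/-- `O` is consistent: it contains no orientations `p* , q` with `p < q` of
distinct underlying separations. -/
def Consistent (O : Set (Set V × Set V)) : Prop :=
  ¬ ∃ p q : Set V × Set V, ({p, sInv p} : Set (Set V × Set V)) ≠ {q, sInv q} ∧
      sLt p q ∧ sInv p ∈ O ∧ q ∈ O

/-- `O` avoids the family `F`: no subset of `O` lies in `F`. -/
def Avoids (O : Set (Set V × Set V)) (F : Set (Set (Set V × Set V))) : Prop :=
  ¬ ∃ σ ∈ F, σ ⊆ O

/-- The family `T` of Robertson–Seymour: all (≤3-element) sets
`{p₁,p₂,p₃}` of oriented separations with `G[A₁] ∪ G[A₂] ∪ G[A₃] = G`. -/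
def Tfam (G : SimpleGraph V) : Set (Set (Set V × Set V)) :=
  {σ | ∃ p₁ p₂ p₃ : Set V × Set V, GIsSep G p₁ ∧ GIsSep G p₂ ∧ GIsSep G p₃ ∧
    σ = {p₁, p₂, p₃} ∧ p₁.1 ∪ p₂.1 ∪ p₃.1 = Set.univ ∧
    ∀ u v : V, G.Adj u v →
      (u ∈ p₁.1 ∧ v ∈ p₁.1) ∨ (u ∈ p₂.1 ∧ v ∈ p₂.1) ∨ (u ∈ p₃.1 ∧ v ∈ p₃.1)}

/-- The family `F_k`: stars of vertex separations `{(Aᵢ,Bᵢ)}` with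
`|⋂ᵢ Bᵢ| < k`. -/
def FkFam (G : SimpleGraph V) (k : ℕ) : Set (Set (Set V × Set V)) :=
  {σ | IsStarP σ ∧ (∀ p ∈ σ, GIsSep G p) ∧ (⋂ p ∈ σ, p.2).ncard < k}

section Helpers
open Relation
variable {G : SimpleGraph V}

def RRel (G : SimpleGraph V) (C : Set V) : V → V → Prop :=
  fun a b => G.Adj a b ∧ a ∈ C ∧ b ∈ C

lemma rr_of_walk {C : Set V} : ∀ {a b : ↥C}, (G.induce C).Walk a b →
    Relation.ReflTransGen (RRel G C) ↑a ↑b := by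
  intro a b w
  induction w with
  | nil => exact .refl
  | @cons a b c h p ih => exact .head ⟨h, a.2, b.2⟩ ih

lemma rr_of_connected {C : Set V} (hconn : (G.induce C).Connected)
    {u v : V} (hu : u ∈ C) (hv : v ∈ C) :
    Relation.ReflTransGen (RRel G C) u v := by
  obtain ⟨w⟩ := hconn ⟨u, hu⟩ ⟨v, hv⟩
  exact rr_of_walk w

lemma connected_of_rr {C : Set V} {v : V} (hv : v ∈ C)
    (h : ∀ u ∈ C, Relation.ReflTransGen (RRel G C) v u) :
    (G.induce C).Connected := by
  rw [SimpleGraph.connected_iff]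
  have key : ∀ u, Relation.ReflTransGen (RRel G C) v u →
      ∀ hu : u ∈ C, (G.induce C).Reachable ⟨v, hv⟩ ⟨u, hu⟩ := by
    intro u h'
    induction h' with
    | refl => intro _; exact SimpleGraph.Reachable.refl _
    | @tail b c hb hbc ih =>
      intro hc
      exact (ih hbc.2.1).trans (SimpleGraph.Adj.reachable (by exact hbc.1 :
        (G.induce C).Adj ⟨b, hbc.2.1⟩ ⟨c, hc⟩))
  exact ⟨fun x y => ((key x (h x x.2) x.2).symm.trans (key y (h y y.2) y.2)), ⟨⟨v, hv⟩⟩⟩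

lemma conn_subset_part {C : Set V} {ι : Type*} (P : ι → Set V)
    (hne : C.Nonempty) (hconn : (G.induce C).Connected)
    (hcover : ∀ u ∈ C, ∃ i, u ∈ P i)
    (hedge : ∀ i j, i ≠ j → ∀ u ∈ P i, ∀ w ∈ P j, ¬ G.Adj u w) :
    ∃ i, C ⊆ P i := by
  classical
  obtain ⟨x, hx⟩ := hne
  obtain ⟨i₀, hxi⟩ := hcover x hx
  refine ⟨i₀, fun y hy => ?_⟩
  have h' : Relation.ReflTransGen (RRel G C) x y := rr_of_connected hconn hx hy
  clear hy
  induction h' with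
  | refl => exact hxi
  | @tail b c hb hbc ih =>
    obtain ⟨j, hcj⟩ := hcover c hbc.2.2
    by_cases hij : j = i₀
    · exact hij ▸ hcj
    · exact absurd hbc.1 (hedge i₀ j (Ne.symm hij) b ih c hcj)

/-- component of `v` in `G - X`. -/
def comp (G : SimpleGraph V) (X : Set V) (v : V) : Set V :=
  {u | Relation.ReflTransGen (fun a b => G.Adj a b ∧ a ∉ X ∧ b ∉ X) v u}

lemma mem_comp_self (X : Set V) (v : V) : v ∈ comp G X v := .refl

lemma comp_not_mem {X : Set V} {v u : V} (hv : v ∉ X) (hu : u ∈ comp G X v) : u ∉ X := by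
  induction hu with
  | refl => exact hv
  | tail _ h _ => exact h.2.2

lemma comp_closure {X : Set V} {v u w : V} (hu : u ∈ comp G X v) (hv : v ∉ X)
    (ha : G.Adj u w) (hw : w ∉ X) : w ∈ comp G X v :=
  hu.tail ⟨ha, comp_not_mem hv hu, hw⟩

lemma comp_symm_mem {X : Set V} {v u : V} (hu : u ∈ comp G X v) : v ∈ comp G X u := by
  induction hu with
  | refl => exact .refl
  | @tail b c hb hbc ih =>
    exact Relation.ReflTransGen.trans (.single ⟨hbc.1.symm, hbc.2.2, hbc.2.1⟩) ih

lemma comp_eq_of_mem {X : Set V} {v u : V} (hu : u ∈ comp G X v) :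
    comp G X u = comp G X v :=
  Set.Subset.antisymm (fun _ h => hu.trans h)
    (fun _ h => (comp_symm_mem hu).trans h)

lemma comp_connected {X : Set V} {v : V} : (G.induce (comp G X v)).Connected := by
  apply connected_of_rr (mem_comp_self X v)
  intro u hu
  induction hu with
  | refl => exact .refl
  | @tail b c hb hbc ih =>
    exact ih.tail ⟨hbc.1, hb, hb.tail hbc⟩

/-- outer neighbourhood -/
def NB (G : SimpleGraph V) (C : Set V) : Set V := {w | w ∉ C ∧ ∃ u ∈ C, G.Adj u w}

lemma NB_comp_subset {X : Set V} {v : V} (hv : v ∉ X) : NB G (comp G X v) ⊆ X := by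
  intro z hz
  by_contra hzX
  obtain ⟨u, hu, ha⟩ := hz.2
  exact hz.1 (comp_closure hu hv ha hzX)

lemma GIsSep_inv {p : Set V × Set V} (h : GIsSep G p) : GIsSep G (sInv p) :=
  ⟨by rw [show (sInv p).1 = p.2 from rfl, show (sInv p).2 = p.1 from rfl,
      Set.union_comm]; exact h.1,
   fun a b ha hna hb hnb hadj => h.2 b a hb hnb ha hna hadj.symm⟩

lemma sOrd_inv {p : Set V × Set V} : sOrd (sInv p) = sOrd p := by
  unfold sOrd sInv
  rw [Set.inter_comm]

lemma Sk_inv {k : ℕ} {p : Set V × Set V} (h : p ∈ Sk G k) : sInv p ∈ Sk G k :=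
  ⟨GIsSep_inv h.1, by rw [sOrd_inv]; exact h.2⟩

lemma sep_pair (G : SimpleGraph V) (C : Set V) : GIsSep G (C ∪ NB G C, Cᶜ) := by
  constructor
  · ext u; simp only [Set.mem_union, Set.mem_compl_iff, Set.mem_univ, iff_true]
    tauto
  · intro a b ha hna hb hnb hadj
    have haC : a ∈ C := not_not.mp (by simpa using hna)
    exact hnb (Or.inr ⟨hb, a, haC, hadj⟩)
end Helpers

/-- A finite graph `G` has a bramble of order at least `k`
(a set of pairwise touching connected vertex sets such that every vertex set
meeting all of them has at least `k` vertices) if and only if `G` has an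
`F_k`-tangle of `S_k`: a consistent orientation of the vertex separations of
order `< k` with no subset in `F_k`. -/
theorem bramble_iff_Fk_tangle {V : Type*} [Fintype V] (G : SimpleGraph V)
    (k : ℕ) (hk : 0 < k) :
    (∃ Br : Set (Set V),
      (∀ C ∈ Br, C.Nonempty ∧ (G.induce C).Connected) ∧
      (∀ C ∈ Br, ∀ D ∈ Br,
        (C ∩ D).Nonempty ∨ ∃ u ∈ C, ∃ v ∈ D, G.Adj u v) ∧
      (∀ X : Set V, (∀ C ∈ Br, (C ∩ X).Nonempty) → k ≤ X.ncard)) ↔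
    (∃ O : Set (Set V × Set V),
      IsOrientation (Sk G k) O ∧ Consistent O ∧ Avoids O (FkFam G k)) := by
  classical
  constructor
  · rintro ⟨Br, hBr1, hBr2, hBr3⟩
    have hsmall : ∀ X : Set V, X.ncard < k → ∃ C ∈ Br, C ∩ X = ∅ := by
      intro X hX
      by_contra h
      push_neg at h
      have := hBr3 X h
      omega
    have hside : ∀ p : Set V × Set V, GIsSep G p → ∀ C ∈ Br, C ⊆ p.1 \ p.2 →
        ∀ D ∈ Br, ¬ D ⊆ p.2 \ p.1 := by
      intro p hsep C hC hCs D hD hDs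
      rcases hBr2 C hC D hD with ⟨u, hu⟩ | ⟨u, hu, w, hw, ha⟩
      · exact (hCs hu.1).2 (hDs hu.2).1
      · exact hsep.2 u w (hCs hu).1 (hCs hu).2 (hDs hw).1 (hDs hw).2 ha
    refine ⟨{p | p ∈ Sk G k ∧ ∃ C ∈ Br, C ⊆ p.2 \ p.1},
      ⟨fun p hp => hp.1, ?_, ?_⟩, ?_, ?_⟩
    · -- every separation gets an orientation
      intro p hp
      obtain ⟨C, hC, hCX⟩ := hsmall (p.1 ∩ p.2) hp.2
      obtain ⟨hCne, hCconn⟩ := hBr1 C hC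
      have hcov : ∀ u ∈ C, ∃ i : Bool, u ∈ (if i then p.2 \ p.1 else p.1 \ p.2) := by
        intro u hu
        have hu1 : u ∈ p.1 ∪ p.2 := by rw [hp.1.1]; trivial
        have hunot : ¬(u ∈ p.1 ∧ u ∈ p.2) := fun h =>
          (Set.eq_empty_iff_forall_notMem.mp hCX u) ⟨hu, h.1, h.2⟩
        rcases hu1 with h1 | h2
        · refine ⟨false, ?_⟩
          simp only [Bool.false_eq_true, if_false]
          exact ⟨h1, fun h2 => hunot ⟨h1, h2⟩⟩
        · refine ⟨true, ?_⟩
          simp only [if_true]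
          exact ⟨h2, fun h1 => hunot ⟨h1, h2⟩⟩
      have hedge : ∀ i j : Bool, i ≠ j → ∀ u ∈ (if i then p.2 \ p.1 else p.1 \ p.2),
          ∀ w ∈ (if j then p.2 \ p.1 else p.1 \ p.2), ¬ G.Adj u w := by
        intro i j hij u hu w hw ha
        cases i <;> cases j <;> simp only [Bool.false_eq_true, if_true, if_false] at hu hw
        · exact hij rfl
        · exact hp.1.2 u w hu.1 hu.2 hw.1 hw.2 ha
        · exact hp.1.2 w u hw.1 hw.2 hu.1 hu.2 ha.symm
        · exact hij rfl
      obtain ⟨i, hCi⟩ := conn_subset_part (G := G)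
        (fun i : Bool => if i then p.2 \ p.1 else p.1 \ p.2) hCne hCconn hcov hedge
      cases i with
      | true => exact Or.inl ⟨hp, C, hC, by simpa using hCi⟩
      | false => exact Or.inr ⟨Sk_inv hp, C, hC, by simpa [sInv] using hCi⟩
    · -- no two opposite orientations
      rintro p ⟨hpS, C, hC, hCs⟩ - ⟨hqS, D, hD, hDs⟩
      exact hside p hpS.1 D hD hDs C hC hCs
    · -- consistent
      rintro ⟨p, q, hset, ⟨hle, hne⟩, ⟨hpS, C, hC, hCs⟩, ⟨hqS, D, hD, hDs⟩⟩
      have hCs' : C ⊆ q.1 \ q.2 := fun u hu =>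
        ⟨hle.1 (hCs hu).1, fun h2 => (hCs hu).2 (hle.2 h2)⟩
      exact hside q hqS.1 C hC hCs' D hD hDs
    · -- avoids Fk
      rintro ⟨σ, ⟨hstar, hsepσ, hord⟩, hσO⟩
      obtain ⟨C, hC, hCX⟩ := hsmall _ hord
      obtain ⟨hCne, hCconn⟩ := hBr1 C hC
      have hcov : ∀ u ∈ C, ∃ q : ↥σ, u ∈ (q : Set V × Set V).1 \ (q : Set V × Set V).2 := by
        intro u hu
        have hni : u ∉ ⋂ p ∈ σ, (p : Set V × Set V).2 := fun h =>
          (Set.eq_empty_iff_forall_notMem.mp hCX u) ⟨hu, h⟩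
        simp only [Set.mem_iInter] at hni
        push_neg at hni
        obtain ⟨p, hp, hp2⟩ := hni
        have hp1 : u ∈ p.1 := by
          have hu1 : u ∈ p.1 ∪ p.2 := by rw [(hsepσ p hp).1]; trivial
          rcases hu1 with h | h
          · exact h
          · exact absurd h hp2
        exact ⟨⟨p, hp⟩, hp1, hp2⟩
      have hedge : ∀ pp qq : ↥σ, pp ≠ qq →
          ∀ u ∈ (pp : Set V × Set V).1 \ (pp : Set V × Set V).2,
          ∀ w ∈ (qq : Set V × Set V).1 \ (qq : Set V × Set V).2, ¬ G.Adj u w := by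
        rintro ⟨p, hp⟩ ⟨q, hq⟩ hne u hu w hw ha
        have hpq : p ≠ q := fun h => hne (by simpa using h)
        have hs := hstar.2 p hp q hq hpq
        exact (hsepσ p hp).2 u w hu.1 hu.2 (hs.2 hw.1) (fun h1 => hw.2 (hs.1 h1)) ha
      obtain ⟨⟨p, hp⟩, hCs⟩ := conn_subset_part (G := G)
        (fun q : ↥σ => (q : Set V × Set V).1 \ (q : Set V × Set V).2) hCne hCconn hcov hedge
      obtain ⟨hpS, D, hD, hDs⟩ := hσO hp
      exact hside p (hsepσ p hp) C hC hCs D hD hDs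
  · rintro ⟨O, hO, hcons, hav⟩
    refine ⟨{C | C.Nonempty ∧ (G.induce C).Connected ∧ (Cᶜ, C ∪ NB G C) ∈ O},
      fun C hC => ⟨hC.1, hC.2.1⟩, ?_, ?_⟩
    · -- touching
      intro C hC D hD
      by_contra h
      push_neg at h
      obtain ⟨hCD, hadj⟩ := h
      have hND : ∀ z ∈ NB G C, z ∉ D := by
        rintro z ⟨hzC, u, hu, ha⟩ hzD
        exact hadj u hu z hzD ha
      have hNC : ∀ z ∈ NB G D, z ∉ C := by
        rintro z ⟨hzD, u, hu, ha⟩ hzC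
        exact hadj z hzC u hu ha.symm
      have hCDe : ∀ z ∈ C, z ∉ D := by
        intro z hz hz'
        exact Set.eq_empty_iff_forall_notMem.mp hCD z ⟨hz, hz'⟩
      have sub1 : C ∪ NB G C ⊆ Dᶜ := by
        rintro z (hz | hz) hz'
        · exact hCDe z hz hz'
        · exact hND z hz hz'
      have sub2 : D ∪ NB G D ⊆ Cᶜ := by
        rintro z (hz | hz) hz'
        · exact hCDe z hz' hz
        · exact hNC z hz hz'
      have hkey : (Cᶜ, C ∪ NB G C) ≠ sInv (Cᶜ, C ∪ NB G C) := by
        intro h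
        have h1 : Cᶜ = C ∪ NB G C := congrArg Prod.fst h
        obtain ⟨c, hc⟩ := hC.1
        have : c ∈ Cᶜ := by rw [h1]; exact Or.inl hc
        exact this hc
      have hne2 : sInv (Cᶜ, C ∪ NB G C) ≠ ((Dᶜ, D ∪ NB G D) : Set V × Set V) := by
        intro h
        have hmem : sInv (Cᶜ, C ∪ NB G C) ∈ O := by rw [h]; exact hD.2.2
        exact hO.2.2 _ hC.2.2 hkey hmem
      apply hcons
      refine ⟨sInv (Cᶜ, C ∪ NB G C), (Dᶜ, D ∪ NB G D), ?_, ⟨⟨sub1, sub2⟩, hne2⟩,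
        hC.2.2, hD.2.2⟩
      intro hset
      have hmem : sInv (Cᶜ, C ∪ NB G C) ∈
          ({(Dᶜ, D ∪ NB G D), sInv (Dᶜ, D ∪ NB G D)} : Set (Set V × Set V)) := by
        rw [← hset]; left; rfl
      rcases hmem with h1 | h2
      · exact hne2 h1
      · have hPD : ((Cᶜ, C ∪ NB G C) : Set V × Set V) = (Dᶜ, D ∪ NB G D) :=
          congrArg sInv h2
        have hCDeq : C = D := compl_injective (congrArg Prod.fst hPD)
        obtain ⟨c, hc⟩ := hC.1
        exact hCDe c hc (hCDeq ▸ hc)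
    · -- order at least k
      intro X hX
      by_contra hlt
      push_neg at hlt
      have hQmem : ∀ v, v ∉ X →
          ((comp G X v ∪ NB G (comp G X v), (comp G X v)ᶜ) : Set V × Set V) ∈ O := by
        intro v hv
        have hsep : GIsSep G (comp G X v ∪ NB G (comp G X v), (comp G X v)ᶜ) :=
          sep_pair G _
        have hordv : sOrd ((comp G X v ∪ NB G (comp G X v), (comp G X v)ᶜ) :
            Set V × Set V) < k := by
          have hsub : (comp G X v ∪ NB G (comp G X v)) ∩ (comp G X v)ᶜ ⊆ X := by
            rintro z ⟨hz1 | hz2, hzc⟩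
            · exact absurd hz1 hzc
            · exact NB_comp_subset hv hz2
          exact lt_of_le_of_lt (Set.ncard_le_ncard hsub X.toFinite) hlt
        rcases hO.2.1 _ ⟨hsep, hordv⟩ with h | h
        · exact h
        · exfalso
          have hBrmem : comp G X v ∈ {C | C.Nonempty ∧ (G.induce C).Connected ∧
              (Cᶜ, C ∪ NB G C) ∈ O} := ⟨⟨v, mem_comp_self X v⟩, comp_connected, h⟩
          obtain ⟨z, hz1, hz2⟩ := hX _ hBrmem
          exact comp_not_mem hv hz1 hz2
      apply hav
      refine ⟨{q | ∃ v, v ∉ X ∧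
          q = ((comp G X v ∪ NB G (comp G X v), (comp G X v)ᶜ) : Set V × Set V)},
        ⟨⟨?_, ?_⟩, ?_, ?_⟩, ?_⟩
      · -- nondegenerate
        rintro q ⟨v, hv, rfl⟩ h
        have h1 : comp G X v ∪ NB G (comp G X v) = (comp G X v)ᶜ :=
          congrArg Prod.fst h
        have : v ∈ (comp G X v)ᶜ := by
          rw [← h1]; exact Or.inl (mem_comp_self X v)
        exact this (mem_comp_self X v)
      · -- star
        rintro q ⟨v, hv, rfl⟩ q' ⟨w, hw, rfl⟩ hne
        have hcne : comp G X v ≠ comp G X w := by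
          intro h; apply hne; rw [h]
        have hdisj : ∀ z, z ∈ comp G X v → z ∉ comp G X w := by
          intro z hz hz'
          exact hcne ((comp_eq_of_mem hz).symm.trans (comp_eq_of_mem hz'))
        constructor
        · rintro z (hz | hz) hz'
          · exact hdisj z hz hz'
          · exact comp_not_mem hw hz' (NB_comp_subset hv hz)
        · rintro z (hz | hz) hz'
          · exact hdisj z hz' hz
          · exact comp_not_mem hv hz' (NB_comp_subset hw hz)
      · -- separations
        rintro q ⟨v, hv, rfl⟩
        exact sep_pair G _
      · -- small interior
        have hsub : (⋂ q ∈ {q | ∃ v, v ∉ X ∧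
            q = ((comp G X v ∪ NB G (comp G X v), (comp G X v)ᶜ) : Set V × Set V)},
            (q : Set V × Set V).2) ⊆ X := by
          intro u hu
          by_contra huX
          have hqσ : ((comp G X u ∪ NB G (comp G X u), (comp G X u)ᶜ) : Set V × Set V)
              ∈ {q | ∃ v, v ∉ X ∧
              q = ((comp G X v ∪ NB G (comp G X v), (comp G X v)ᶜ) : Set V × Set V)} :=
            ⟨u, huX, rfl⟩
          exact (Set.mem_iInter₂.mp hu _ hqσ) (mem_comp_self X u)
        exact lt_of_le_of_lt (Set.ncard_le_ncard hsub X.toFinite) hlt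
      · -- subset of O
        rintro q ⟨v, hv, rfl⟩
        exact hQmem v hv
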